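/- Let L > 0 and T > 0, and let φ be a classical solution on [0,L]×[0,T] of the adjoint linear KdV system φ_t + φ_x + φ_{xxx} = 0 with boundary conditions φ(L,t) = 0, φ_x(L,t) = 0 and φ(0,t) + φ_{xx}(0,t) = 0 for all t ∈ [0,T]. Then the multiplier identity −T ∫₀^L φ(x,0)² dx + ∫₀^T (T − t) ( φ(0,t)² + φ_x(0,t)² ) dt + ∫₀^T ∫₀^L φ(x,t)² dx dt = 0 holds. -/

import Mathlib

open MeasureTheory Set

/-- **Multiplier identity for the adjoint linear KdV system.**
If `φ` is a classical solution of `φ_t + φ_x + φ_{xxx} = 0` on `[0,L] × [0,T]`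
with boundary conditions `φ(L,t) = 0`, `φ_x(L,t) = 0`, `φ(0,t) + φ_{xx}(0,t) = 0`, then
`−T ∫₀^L φ(x,0)² dx + ∫₀^T (T−t)(φ(0,t)² + φ_x(0,t)²) dt + ∫₀^T ∫₀^L φ² dx dt = 0`. -/
theorem adjoint_kdv_multiplier_identity
    (L T : ℝ) (hL : 0 < L) (hT : 0 < T)
    (φ φt φx φxx φxxx : ℝ → ℝ → ℝ)
    (hφt : ∀ x ∈ Icc (0:ℝ) L, ∀ t ∈ Icc (0:ℝ) T,
      HasDerivAt (fun s => φ x s) (φt x t) t)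
    (hφx : ∀ x ∈ Icc (0:ℝ) L, ∀ t ∈ Icc (0:ℝ) T,
      HasDerivAt (fun y => φ y t) (φx x t) x)
    (hφxx : ∀ x ∈ Icc (0:ℝ) L, ∀ t ∈ Icc (0:ℝ) T,
      HasDerivAt (fun y => φx y t) (φxx x t) x)
    (hφxxx : ∀ x ∈ Icc (0:ℝ) L, ∀ t ∈ Icc (0:ℝ) T,
      HasDerivAt (fun y => φxx y t) (φxxx x t) x)
    (hcont : ContinuousOn (fun p : ℝ × ℝ => φ p.1 p.2) (Icc 0 L ×ˢ Icc 0 T))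
    (hcontt : ContinuousOn (fun p : ℝ × ℝ => φt p.1 p.2) (Icc 0 L ×ˢ Icc 0 T))
    (hcontx : ContinuousOn (fun p : ℝ × ℝ => φx p.1 p.2) (Icc 0 L ×ˢ Icc 0 T))
    (hcontxx : ContinuousOn (fun p : ℝ × ℝ => φxx p.1 p.2) (Icc 0 L ×ˢ Icc 0 T))
    (hcontxxx : ContinuousOn (fun p : ℝ × ℝ => φxxx p.1 p.2) (Icc 0 L ×ˢ Icc 0 T))
    (hpde : ∀ x ∈ Icc (0:ℝ) L, ∀ t ∈ Icc (0:ℝ) T,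
      φt x t + φx x t + φxxx x t = 0)
    (hbc1 : ∀ t ∈ Icc (0:ℝ) T, φ L t = 0)
    (hbc2 : ∀ t ∈ Icc (0:ℝ) T, φx L t = 0)
    (hbc3 : ∀ t ∈ Icc (0:ℝ) T, φ 0 t + φxx 0 t = 0) :
    -T * (∫ x in (0:ℝ)..L, (φ x 0) ^ 2)
      + (∫ t in (0:ℝ)..T, (T - t) * ((φ 0 t) ^ 2 + (φx 0 t) ^ 2))
      + (∫ t in (0:ℝ)..T, ∫ x in (0:ℝ)..L, (φ x t) ^ 2)
      = 0 := by
  set S : Set (ℝ × ℝ) := Icc 0 L ×ˢ Icc 0 T with hSdef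
  have hScompact : IsCompact S := (isCompact_Icc).prod isCompact_Icc
  -- bounds
  obtain ⟨C0, hC0⟩ := hScompact.exists_bound_of_continuousOn hcont
  obtain ⟨C1, hC1⟩ := hScompact.exists_bound_of_continuousOn hcontt
  have h00S : ((0:ℝ), (0:ℝ)) ∈ S := ⟨⟨le_refl _, hL.le⟩, ⟨le_refl _, hT.le⟩⟩
  have hC0nn : 0 ≤ C0 := (norm_nonneg _).trans (hC0 _ h00S)
  have hC1nn : 0 ≤ C1 := (norm_nonneg _).trans (hC1 _ h00S)
  -- continuity in x for fixed t
  have contx : ∀ (f : ℝ → ℝ → ℝ), ContinuousOn (fun p : ℝ × ℝ => f p.1 p.2) S →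
      ∀ t ∈ Icc (0:ℝ) T, ContinuousOn (fun x => f x t) (Icc 0 L) := by
    intro f hf t ht
    have : ContinuousOn (fun x : ℝ => ((x, t) : ℝ × ℝ)) (Icc 0 L) :=
      (continuous_id.prodMk continuous_const).continuousOn
    exact hf.comp this (fun x hx => ⟨hx, ht⟩)
  -- continuity in t for fixed x
  have contt : ∀ (f : ℝ → ℝ → ℝ), ContinuousOn (fun p : ℝ × ℝ => f p.1 p.2) S →
      ∀ x ∈ Icc (0:ℝ) L, ContinuousOn (fun t => f x t) (Icc 0 T) := by
    intro f hf x hx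
    have : ContinuousOn (fun t : ℝ => ((x, t) : ℝ × ℝ)) (Icc 0 T) :=
      (continuous_const.prodMk continuous_id).continuousOn
    exact hf.comp this (fun t ht => ⟨hx, ht⟩)
  set E : ℝ → ℝ := fun t => ∫ x in (0:ℝ)..L, (φ x t) ^ 2 with hEdef
  set g : ℝ → ℝ := fun t => (φ 0 t) ^ 2 + (φx 0 t) ^ 2 with hgdef
  have h0L : (0:ℝ) ∈ Icc (0:ℝ) L := ⟨le_refl _, hL.le⟩
  have hLL : L ∈ Icc (0:ℝ) L := ⟨hL.le, le_refl _⟩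
  have huIcc : uIcc (0:ℝ) L = Icc 0 L := uIcc_of_le hL.le
  have huIccT : uIcc (0:ℝ) T = Icc 0 T := uIcc_of_le hT.le
  -- Step B : the space integral of 2 φ φt equals -g t
  have hB : ∀ t ∈ Icc (0:ℝ) T, (∫ x in (0:ℝ)..L, 2 * φ x t * φt x t) = - g t := by
    intro t ht
    have hint1 : IntervalIntegrable (fun x => 2 * φ x t * φx x t) volume 0 L := by
      apply ContinuousOn.intervalIntegrable
      rw [huIcc]
      exact ((continuousOn_const.mul (contx φ hcont t ht)).mul (contx φx hcontx t ht))
    have hint3 : IntervalIntegrable (fun x => 2 * φ x t * φxxx x t) volume 0 L := by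
      apply ContinuousOn.intervalIntegrable
      rw [huIcc]
      exact ((continuousOn_const.mul (contx φ hcont t ht)).mul (contx φxxx hcontxxx t ht))
    have h1 : (∫ x in (0:ℝ)..L, 2 * φ x t * φx x t) = (φ L t)^2 - (φ 0 t)^2 := by
      apply intervalIntegral.integral_eq_sub_of_hasDerivAt
      · intro x hx
        rw [huIcc] at hx
        have := (hφx x hx t ht).pow 2
        exact this.congr_deriv (by norm_num)
      · exact hint1
    have h2 : (∫ x in (0:ℝ)..L, 2 * φ x t * φxxx x t)
        = (2 * (φ L t * φxx L t) - (φx L t)^2) - (2 * (φ 0 t * φxx 0 t) - (φx 0 t)^2) := by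
      apply intervalIntegral.integral_eq_sub_of_hasDerivAt
        (f := fun x => 2 * (φ x t * φxx x t) - (φx x t)^2)
      · intro x hx
        rw [huIcc] at hx
        have hd := (((hφx x hx t ht).mul (hφxxx x hx t ht)).const_mul 2).sub
          ((hφxx x hx t ht).pow 2)
        exact hd.congr_deriv (by norm_num; ring)
      · exact hint3
    have heq : ∀ x ∈ uIcc (0:ℝ) L,
        2 * φ x t * φt x t = (-(2 * φ x t * φx x t)) + (-(2 * φ x t * φxxx x t)) := by
      intro x hx
      rw [huIcc] at hx
      have hpt := hpde x hx t ht
      have hrw : φt x t = -φx x t - φxxx x t := by linarith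
      rw [hrw]; ring
    have hint1' : IntervalIntegrable (fun x => -(2 * φ x t * φx x t)) volume 0 L := by
      exact hint1.neg
    have hint3' : IntervalIntegrable (fun x => -(2 * φ x t * φxxx x t)) volume 0 L := by
      exact hint3.neg
    rw [intervalIntegral.integral_congr heq, intervalIntegral.integral_add hint1' hint3',
      intervalIntegral.integral_neg, intervalIntegral.integral_neg, h1, h2]
    have b1 := hbc1 t ht
    have b2 := hbc2 t ht
    have b3' : φxx 0 t = - φ 0 t := by have := hbc3 t ht; linarith
    simp only [hgdef]
    rw [b1, b2, b3']
    ring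
  -- Step C : continuity of E on [0,T]
  have hEcont : ContinuousOn E (Icc 0 T) := by
    have key : ContinuousOn (fun t => ∫ x, (φ x t)^2 ∂(volume.restrict (Ioc 0 L))) (Icc 0 T) := by
      refine continuousOn_of_dominated (bound := fun _ => C0^2) ?_ ?_ ?_ ?_
      · intro t ht
        exact (((contx φ hcont t ht).pow 2).mono Ioc_subset_Icc_self).aestronglyMeasurable
          measurableSet_Ioc
      · intro t ht
        refine (ae_restrict_iff' measurableSet_Ioc).2 (ae_of_all _ fun x hx => ?_)
        have hxS : ((x, t) : ℝ × ℝ) ∈ S := ⟨Ioc_subset_Icc_self hx, ht⟩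
        have := hC0 _ hxS
        simp only [Real.norm_eq_abs] at this ⊢
        rw [abs_pow]
        exact pow_le_pow_left₀ (abs_nonneg _) this 2
      · exact integrableOn_const measure_Ioc_lt_top.ne
      · refine (ae_restrict_iff' measurableSet_Ioc).2 (ae_of_all _ fun x hx => ?_)
        exact (contt φ hcont x (Ioc_subset_Icc_self hx)).pow 2
    exact key.congr fun t ht => intervalIntegral.integral_of_le hL.le
  -- Step D : derivative of E at interior points
  have hEderiv : ∀ t ∈ Ioo (0:ℝ) T, HasDerivAt E (- g t) t := by
    intro t₀ ht₀
    obtain ⟨ε, hε, hball⟩ := Metric.isOpen_iff.1 isOpen_Ioo t₀ ht₀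
    have hmeas : ∀ᶠ t in nhds t₀, AEStronglyMeasurable (fun x => (φ x t)^2)
        (volume.restrict (Set.uIoc 0 L)) := by
      refine Filter.eventually_of_mem (Metric.ball_mem_nhds t₀ hε) fun t ht => ?_
      have htIcc : t ∈ Icc (0:ℝ) T := Ioo_subset_Icc_self (hball ht)
      rw [Set.uIoc_of_le hL.le]
      exact (((contx φ hcont t htIcc).pow 2).mono Ioc_subset_Icc_self).aestronglyMeasurable
        measurableSet_Ioc
    have ht₀Icc : t₀ ∈ Icc (0:ℝ) T := Ioo_subset_Icc_self ht₀
    have hint : IntervalIntegrable (fun x => (φ x t₀)^2) volume 0 L := by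
      apply ContinuousOn.intervalIntegrable
      rw [huIcc]
      exact (contx φ hcont t₀ ht₀Icc).pow 2
    have hmeas' : AEStronglyMeasurable (fun x => 2 * φ x t₀ * φt x t₀)
        (volume.restrict (Set.uIoc 0 L)) := by
      rw [Set.uIoc_of_le hL.le]
      exact (((continuousOn_const.mul (contx φ hcont t₀ ht₀Icc)).mul
        (contx φt hcontt t₀ ht₀Icc)).mono Ioc_subset_Icc_self).aestronglyMeasurable
        measurableSet_Ioc
    have h_bound : ∀ᵐ x ∂volume, x ∈ Set.uIoc 0 L → ∀ t ∈ Metric.ball t₀ ε,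
        ‖2 * φ x t * φt x t‖ ≤ 2 * C0 * C1 := by
      refine ae_of_all _ fun x hx t ht => ?_
      rw [Set.uIoc_of_le hL.le] at hx
      have htIcc : t ∈ Icc (0:ℝ) T := Ioo_subset_Icc_self (hball ht)
      have hxS : ((x, t) : ℝ × ℝ) ∈ S := ⟨Ioc_subset_Icc_self hx, htIcc⟩
      have b0 := hC0 _ hxS
      have b1 := hC1 _ hxS
      simp only [Real.norm_eq_abs] at b0 b1 ⊢
      calc |2 * φ x t * φt x t| = 2 * |φ x t| * |φt x t| := by
            rw [abs_mul, abs_mul]; simp [abs_of_nonneg]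
        _ ≤ 2 * C0 * C1 := by
            apply mul_le_mul _ b1 (abs_nonneg _) (by positivity)
            nlinarith [abs_nonneg (φ x t)]
    have h_diff : ∀ᵐ x ∂volume, x ∈ Set.uIoc 0 L → ∀ t ∈ Metric.ball t₀ ε,
        HasDerivAt (fun t => (φ x t)^2) (2 * φ x t * φt x t) t := by
      refine ae_of_all _ fun x hx t ht => ?_
      rw [Set.uIoc_of_le hL.le] at hx
      have htIcc : t ∈ Icc (0:ℝ) T := Ioo_subset_Icc_self (hball ht)
      have := (hφt x (Ioc_subset_Icc_self hx) t htIcc).pow 2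
      exact this.congr_deriv (by norm_num)
    have key := intervalIntegral.hasDerivAt_integral_of_dominated_loc_of_deriv_le
      (F := fun t x => (φ x t)^2) (F' := fun t x => 2 * φ x t * φt x t)
      (bound := fun _ => 2 * C0 * C1) (Metric.ball_mem_nhds t₀ hε) hmeas hint hmeas'
      h_bound (intervalIntegrable_const) h_diff
    have := key.2
    rw [hB t₀ ht₀Icc] at this
    exact this
  -- Step E+F : FTC for Φ t = (T - t) * E t
  have hgcont : ContinuousOn g (Icc 0 T) := by
    exact ((contt φ hcont 0 h0L).pow 2).add ((contt φx hcontx 0 h0L).pow 2)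
  have hΦcont : ContinuousOn (fun t => (T - t) * E t) (Icc 0 T) :=
    (continuous_const.sub continuous_id).continuousOn.mul hEcont
  have hf'int : IntervalIntegrable (fun t => - E t - (T - t) * g t) volume 0 T := by
    apply ContinuousOn.intervalIntegrable
    rw [huIccT]
    exact (hEcont.neg).sub ((continuous_const.sub continuous_id).continuousOn.mul hgcont)
  have hFTC : (∫ t in (0:ℝ)..T, (- E t - (T - t) * g t))
      = (T - T) * E T - (T - 0) * E 0 := by
    apply intervalIntegral.integral_eq_sub_of_hasDeriv_right_of_le hT.le hΦcont
    · intro t ht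
      have hd : HasDerivAt (fun t => (T - t) * E t) (- E t - (T - t) * g t) t := by
        have h1 : HasDerivAt (fun t : ℝ => T - t) (-1 : ℝ) t := by
          simpa using (hasDerivAt_id t).const_sub T
        have := h1.mul (hEderiv t ht)
        exact this.congr_deriv (by ring)
      exact hd.hasDerivWithinAt
    · exact hf'int
  have hEint : IntervalIntegrable E volume 0 T := by
    apply ContinuousOn.intervalIntegrable; rw [huIccT]; exact hEcont
  have hgint : IntervalIntegrable (fun t => (T - t) * g t) volume 0 T := by
    apply ContinuousOn.intervalIntegrable; rw [huIccT]
    exact (continuous_const.sub continuous_id).continuousOn.mul hgcont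
  have hEint' : IntervalIntegrable (fun t => - E t) volume 0 T := by exact hEint.neg
  rw [intervalIntegral.integral_sub hEint' hgint, intervalIntegral.integral_neg] at hFTC
  have hsplit : (∫ t in (0:ℝ)..T, (T - t) * ((φ 0 t) ^ 2 + (φx 0 t) ^ 2))
      = ∫ t in (0:ℝ)..T, (T - t) * g t := rfl
  have hE0 : E 0 = ∫ x in (0:ℝ)..L, (φ x 0) ^ 2 := rfl
  have hdbl : (∫ t in (0:ℝ)..T, ∫ x in (0:ℝ)..L, (φ x t) ^ 2)
      = ∫ t in (0:ℝ)..T, E t := rfl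
  have hend : (T - T) * E T - (T - 0) * E 0 = -(T * E 0) := by ring
  rw [hend] at hFTC
  rw [hsplit, hdbl, ← hE0]
  linarith [hFTC]
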